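/- For every integer n ≥ 1 and every integer j ≥ 1, a_j = (1/(2n)) · Σ_{k=0}^{n−1} (2·cos(2πk/n))^j (an equality of real numbers, the left-hand side being the natural number a_j regarded as a real number). -/

import Mathlib

open scoped Real

noncomputable section

/-- Words in two letters. -/
abbrev FW := FreeMonoid (Fin 2)

/-- The free associative unital ℂ-algebra on two generators. -/
abbrev FA := MonoidAlgebra ℂ FW

/-- The generator `u`. -/
def gu : FA := MonoidAlgebra.of ℂ FW (FreeMonoid.of 0)

/-- The generator `v`. -/
def gv : FA := MonoidAlgebra.of ℂ FW (FreeMonoid.of 1)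

/-- The algebra endomorphism `ρ` with `ρ(u) = ξ u`, `ρ(v) = ξ⁻¹ v`, `ξ = exp(2πi/n)`. -/
def dRho (n : ℕ) : FA →ₐ[ℂ] FA :=
  MonoidAlgebra.lift ℂ FA FW
    (FreeMonoid.lift fun i : Fin 2 =>
      if i = 0 then Complex.exp (2 * Real.pi * Complex.I / n) • gu
      else (Complex.exp (2 * Real.pi * Complex.I / n))⁻¹ • gv)

/-- The algebra endomorphism `τ` exchanging `u` and `v`. -/
def dTau : FA →ₐ[ℂ] FA :=
  MonoidAlgebra.lift ℂ FA FW
    (FreeMonoid.lift fun i : Fin 2 => if i = 0 then gv else gu)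

/-- The invariant algebra `ℂ⟨u,v⟩^{D_{2n}}`. -/
def invAlg (n : ℕ) : Subalgebra ℂ FA :=
  AlgHom.equalizer (dRho n) (AlgHom.id ℂ FA) ⊓ AlgHom.equalizer dTau (AlgHom.id ℂ FA)

/-- The degree-`j` homogeneous component of `ℂ⟨u,v⟩`: the span of words of length `j`. -/
def degComp (j : ℕ) : Submodule ℂ FA :=
  MonoidAlgebra.supported ℂ ℂ {w : FW | FreeMonoid.length w = j}

/-- `a_j`: the dimension of the degree-`j` homogeneous component of the invariant algebra. -/
def aDim (n j : ℕ) : ℕ :=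
  Module.finrank ℂ ↥((invAlg n).toSubmodule ⊓ degComp j)

instance : DecidableEq FW := fun a b =>
  decidable_of_iff (FreeMonoid.toList a = FreeMonoid.toList b)
    FreeMonoid.toList.apply_eq_iff_eq

instance : CoeFun FA (fun _ => FW → ℂ) := ⟨fun f => f.coeff⟩

def xic (n : ℕ) : ℂ := Complex.exp (2 * Real.pi * Complex.I / n)

lemma xic_ne_zero (n : ℕ) : xic n ≠ 0 := Complex.exp_ne_zero _

def eps (i : Fin 2) : ℤ := if i = 0 then 1 else -1

def dW (w : FW) : ℤ := ((FreeMonoid.toList w).map eps).sum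

def sw : Fin 2 → Fin 2 := fun i => if i = 0 then 1 else 0

lemma sw_invol : Function.Involutive sw := by intro i; fin_cases i <;> rfl

lemma mapsw_invol : Function.Involutive (fun w : FW => FreeMonoid.map sw w) := by
  intro w
  apply FreeMonoid.toList.injective
  simp [FreeMonoid.toList_map, List.map_map, sw_invol.comp_self]

def swE : FW ≃ FW := mapsw_invol.toPerm

lemma swE_apply (w : FW) : swE w = FreeMonoid.map sw w := rfl

lemma swE_symm (w : FW) : swE.symm w = swE w := rfl

lemma length_swE (w : FW) : (swE w).length = w.length := by
  show (FreeMonoid.map sw w).toList.length = _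
  rw [FreeMonoid.toList_map, List.length_map]; rfl

lemma dW_swE (w : FW) : dW (swE w) = - dW w := by
  show ((FreeMonoid.map sw w).toList.map eps).sum = _
  rw [FreeMonoid.toList_map, List.map_map]
  unfold dW
  induction (FreeMonoid.toList w) with
  | nil => simp
  | cons a l ih =>
    simp only [List.map_cons, List.sum_cons, ih, Function.comp]
    have : eps (sw a) = - eps a := by fin_cases a <;> simp [eps, sw]
    rw [this]; ring

-- dRho on singles
lemma dRho_list (n : ℕ) (l : List (Fin 2)) :
    (List.map (fun i : Fin 2 =>
      if i = 0 then Complex.exp (2 * Real.pi * Complex.I / n) • gu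
      else (Complex.exp (2 * Real.pi * Complex.I / n))⁻¹ • gv) l).prod
      = xic n ^ ((l.map eps).sum) • MonoidAlgebra.of ℂ FW (FreeMonoid.ofList l) := by
  induction l with
  | nil => simp [FreeMonoid.ofList]; rfl
  | cons a l ih =>
    rw [List.map_cons, List.prod_cons, ih]
    have hof : FreeMonoid.ofList (a :: l) = FreeMonoid.of a * FreeMonoid.ofList l := rfl
    rw [hof, map_mul, List.map_cons, List.sum_cons]
    have hgen : (if a = 0 then Complex.exp (2 * Real.pi * Complex.I / n) • gu
      else (Complex.exp (2 * Real.pi * Complex.I / n))⁻¹ • gv)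
        = xic n ^ (eps a) • MonoidAlgebra.of ℂ FW (FreeMonoid.of a) := by
      fin_cases a
      · simp [eps, xic, gu]
      · simp [eps, xic, gv, zpow_neg]
    rw [hgen, smul_mul_smul_comm, ← zpow_add₀ (xic_ne_zero n)]

lemma dRho_single (n : ℕ) (w : FW) :
    dRho n (MonoidAlgebra.single w 1) = xic n ^ (dW w) • MonoidAlgebra.single w (1:ℂ) := by
  unfold dRho
  rw [MonoidAlgebra.lift_single, one_smul, FreeMonoid.lift_apply, dRho_list]
  rw [FreeMonoid.ofList_toList]
  rfl

lemma dTau_list (l : List (Fin 2)) :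
    (List.map (fun i : Fin 2 => if i = 0 then gv else gu) l).prod
      = MonoidAlgebra.of ℂ FW (FreeMonoid.ofList (l.map sw)) := by
  induction l with
  | nil => simp [FreeMonoid.ofList]; rfl
  | cons a l ih =>
    rw [List.map_cons, List.prod_cons, ih, List.map_cons]
    have hof : FreeMonoid.ofList (sw a :: l.map sw)
        = FreeMonoid.of (sw a) * FreeMonoid.ofList (l.map sw) := rfl
    rw [hof, map_mul]
    congr 1
    fin_cases a <;> simp [gv, gu, sw]

lemma dTau_single (w : FW) :
    dTau (MonoidAlgebra.single w 1) = MonoidAlgebra.single (swE w) (1:ℂ) := by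
  unfold dTau
  rw [MonoidAlgebra.lift_single, one_smul, FreeMonoid.lift_apply, dTau_list]
  have : FreeMonoid.ofList ((FreeMonoid.toList w).map sw) = swE w := by
    apply FreeMonoid.toList.injective
    rw [FreeMonoid.toList_ofList, swE_apply, FreeMonoid.toList_map]
  rw [this]
  rfl

-- pointwise formulas
lemma dRho_apply (n : ℕ) (f : FA) (w : FW) :
    dRho n f w = xic n ^ dW w * f w := by
  induction f using MonoidAlgebra.induction_linear with
  | zero => simp
  | add x y hx hy =>
    rw [map_add, MonoidAlgebra.coeff_add, MonoidAlgebra.coeff_add, Finsupp.add_apply,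
      Finsupp.add_apply, hx, hy, mul_add]
  | single a b =>
    have : (MonoidAlgebra.single a b : FA) = b • MonoidAlgebra.single a 1 := by
      rw [MonoidAlgebra.smul_single', mul_one]
    rw [this, map_smul, dRho_single, smul_smul]
    simp only [MonoidAlgebra.smul_single', MonoidAlgebra.coeff_single, Finsupp.single_apply]
    split_ifs with h
    · subst h; ring
    · ring

lemma dTau_apply (f : FA) (w : FW) : dTau f w = f (swE w) := by
  induction f using MonoidAlgebra.induction_linear with
  | zero => simp
  | add x y hx hy =>
    rw [map_add, MonoidAlgebra.coeff_add, MonoidAlgebra.coeff_add, Finsupp.add_apply,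
      Finsupp.add_apply, hx, hy]
  | single a b =>
    have : (MonoidAlgebra.single a b : FA) = b • MonoidAlgebra.single a 1 := by
      rw [MonoidAlgebra.smul_single', mul_one]
    rw [this, map_smul, dTau_single]
    simp only [MonoidAlgebra.smul_single', MonoidAlgebra.coeff_single, Finsupp.single_apply]
    have h : (swE a = w) ↔ (a = swE w) :=
      ⟨fun h => by rw [← h]; exact (mapsw_invol a).symm, fun h => by rw [h]; exact mapsw_invol w⟩
    rw [if_congr h rfl rfl]

lemma xic_zpow_eq_one (n : ℕ) (hn : 1 ≤ n) (d : ℤ) :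
    xic n ^ d = 1 ↔ (n:ℤ) ∣ d := by
  have hn0 : (n:ℂ) ≠ 0 := Nat.cast_ne_zero.mpr (by omega)
  have hc : (2 * (π:ℂ) * Complex.I) ≠ 0 := by
    simp [Real.pi_ne_zero, Complex.I_ne_zero]
  rw [xic, ← Complex.exp_int_mul, Complex.exp_eq_one_iff]
  constructor
  · rintro ⟨m, hm⟩
    refine ⟨m, ?_⟩
    have : (d : ℂ) = n * m := by
      field_simp [hn0] at hm
      have h2 : (d:ℂ) * (2 * ↑π * Complex.I) = (↑n * ↑m) * (2 * ↑π * Complex.I) := by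
        rw [hm]
      exact mul_right_cancel₀ hc h2
    exact_mod_cast this
  · rintro ⟨m, hm⟩
    refine ⟨m, ?_⟩
    rw [hm]
    push_cast
    field_simp

lemma length_eq (w : FW) : FreeMonoid.length w = (FreeMonoid.toList w).length := rfl

set_option maxHeartbeats 1000000 in
lemma mem_M_iff (n : ℕ) (hn : 1 ≤ n) (j : ℕ) (f : FA) :
    f ∈ (invAlg n).toSubmodule ⊓ degComp j ↔
      (∀ w : FW, f w ≠ 0 → FreeMonoid.length w = j)
      ∧ (∀ w : FW, ¬ ((n:ℤ) ∣ dW w) → f w = 0)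
      ∧ (∀ w : FW, f (swE w) = f w) := by
  rw [Submodule.mem_inf, Subalgebra.mem_toSubmodule]
  have hsplit : f ∈ invAlg n ↔ f ∈ AlgHom.equalizer (dRho n) (AlgHom.id ℂ FA)
      ∧ f ∈ AlgHom.equalizer dTau (AlgHom.id ℂ FA) := Iff.rfl
  rw [hsplit]
  have hrho : f ∈ AlgHom.equalizer (dRho n) (AlgHom.id ℂ FA)
      ↔ (∀ w : FW, ¬ ((n:ℤ) ∣ dW w) → f w = 0) := by
    show dRho n f = f ↔ _
    constructor
    · intro h w hw
      have h1 : xic n ^ dW w * f w = f w := by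
        rw [← dRho_apply, h]
      have h2 : (xic n ^ dW w - 1) * f w = 0 := by linear_combination h1
      rcases mul_eq_zero.mp h2 with h3 | h3
      · exact absurd ((xic_zpow_eq_one n hn (dW w)).mp (by linear_combination h3)) hw
      · exact h3
    · intro h
      apply MonoidAlgebra.coeff_injective
      apply Finsupp.ext
      intro w
      rw [dRho_apply]
      by_cases hd : (n:ℤ) ∣ dW w
      · rw [(xic_zpow_eq_one n hn (dW w)).mpr hd, one_mul]
      · rw [h w hd, mul_zero]
  have htau : f ∈ AlgHom.equalizer dTau (AlgHom.id ℂ FA)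
      ↔ (∀ w : FW, f (swE w) = f w) := by
    show dTau f = f ↔ _
    constructor
    · intro h w
      conv_rhs => rw [← h]
      rw [dTau_apply]
    · intro h
      apply MonoidAlgebra.coeff_injective
      apply Finsupp.ext
      intro w
      rw [dTau_apply, h]
  have hdeg : f ∈ degComp j ↔ (∀ w : FW, f w ≠ 0 → FreeMonoid.length w = j) := by
    rw [degComp, MonoidAlgebra.mem_supported]
    constructor
    · intro h w hw
      exact h (Finsupp.mem_support_iff.mpr hw)
    · intro h w hw
      exact h w (Finsupp.mem_support_iff.mp hw)
  rw [hrho, htau, hdeg]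
  tauto

-- the finite sets
def wordF (j : ℕ) (g : Fin j → Fin 2) : FW := FreeMonoid.ofList (List.ofFn g)

lemma wordF_injective (j : ℕ) : Function.Injective (wordF j) := by
  intro a b h
  exact List.ofFn_injective (FreeMonoid.ofList.injective h)

def Tf (n j : ℕ) : Finset (Fin j → Fin 2) :=
  Finset.univ.filter fun g => (n:ℤ) ∣ dW (wordF j g)

def Tset (n j : ℕ) : Finset FW := (Tf n j).image (wordF j)

def Rset (n j : ℕ) : Finset FW :=
  (Tset n j).filter fun w => FreeMonoid.toList w < FreeMonoid.toList (swE w)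

lemma mem_Tset (n j : ℕ) (w : FW) :
    w ∈ Tset n j ↔ FreeMonoid.length w = j ∧ (n:ℤ) ∣ dW w := by
  constructor
  · intro h
    rcases Finset.mem_image.mp h with ⟨g, hg, rfl⟩
    rw [Tf, Finset.mem_filter] at hg
    refine ⟨?_, hg.2⟩
    rw [length_eq, wordF, FreeMonoid.toList_ofList, List.length_ofFn]
  · rintro ⟨hlen, hdvd⟩
    rw [length_eq] at hlen
    apply Finset.mem_image.mpr
    refine ⟨fun i => (FreeMonoid.toList w).get (Fin.cast hlen.symm i), ?_, ?_⟩
    · rw [Tf, Finset.mem_filter]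
      refine ⟨Finset.mem_univ _, ?_⟩
      have : wordF j (fun i => (FreeMonoid.toList w).get (Fin.cast hlen.symm i)) = w := by
        apply FreeMonoid.toList.injective
        rw [wordF, FreeMonoid.toList_ofList]
        subst hlen
        exact List.ofFn_get _
      rw [this]
      exact hdvd
    · apply FreeMonoid.toList.injective
      rw [wordF, FreeMonoid.toList_ofList]
      subst hlen
      exact List.ofFn_get _

lemma swE_mem_Tset {n j : ℕ} {w : FW} (h : w ∈ Tset n j) : swE w ∈ Tset n j := by
  rw [mem_Tset] at h ⊢
  refine ⟨?_, ?_⟩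
  · rw [show FreeMonoid.length (swE w) = (swE w).toList.length from rfl]
    have := length_swE w
    rw [← h.1]; exact this
  · rw [dW_swE]; exact h.2.neg_right

lemma swE_ne_self {n j : ℕ} (hj : 1 ≤ j) {w : FW} (h : w ∈ Tset n j) : swE w ≠ w := by
  intro heq
  have hlen : (FreeMonoid.toList w).length = j := ((mem_Tset n j w).mp h).1
  have h2 : List.map sw (FreeMonoid.toList w) = FreeMonoid.toList w := by
    rw [← FreeMonoid.toList_map]; exact congrArg FreeMonoid.toList heq
  cases hl : FreeMonoid.toList w with
  | nil => rw [hl] at hlen; simp at hlen; omega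
  | cons a t =>
    rw [hl, List.map_cons] at h2
    have : sw a = a := (List.cons.injEq _ _ _ _).mp h2 |>.1
    fin_cases a <;> simp [sw] at this

lemma card_Tset (n j : ℕ) : (Tset n j).card = (Tf n j).card :=
  Finset.card_image_of_injective _ (wordF_injective j)

lemma card_Tset_two_mul (n j : ℕ) (hj : 1 ≤ j) :
    (Tset n j).card = 2 * (Rset n j).card := by
  have hsplit : (Rset n j).card
      + ((Tset n j).filter fun w => ¬ FreeMonoid.toList w < FreeMonoid.toList (swE w)).card
      = (Tset n j).card := by
    rw [Rset]
    exact Finset.card_filter_add_card_filter_not _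
  have hbij : (Rset n j).card
      = ((Tset n j).filter fun w => ¬ FreeMonoid.toList w < FreeMonoid.toList (swE w)).card := by
    apply Finset.card_nbij (fun w => swE w)
    · intro a ha
      rw [Finset.mem_coe, Rset, Finset.mem_filter] at ha
      rw [Finset.mem_coe, Finset.mem_filter]
      refine ⟨swE_mem_Tset ha.1, ?_⟩
      have hinv : swE (swE a) = a := mapsw_invol a
      rw [hinv]
      exact lt_asymm ha.2
    · exact fun a _ b _ hab => swE.injective hab
    · intro x hx
      rw [Finset.mem_coe, Finset.mem_filter] at hx
      refine ⟨swE x, ?_, mapsw_invol x⟩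
      rw [Finset.mem_coe, Rset, Finset.mem_filter]
      refine ⟨swE_mem_Tset hx.1, ?_⟩
      have hinv : swE (swE x) = x := mapsw_invol x
      rw [hinv]
      have hne : swE x ≠ x := swE_ne_self hj hx.1
      rcases lt_or_ge (FreeMonoid.toList (swE x)) (FreeMonoid.toList x) with h | h
      · exact h
      · exfalso
        rcases lt_or_eq_of_le h with h' | h'
        · exact hx.2 h'
        · exact hne (FreeMonoid.toList.injective h'.symm)
  omega

def bvec (w : FW) : FA := MonoidAlgebra.single w 1 + MonoidAlgebra.single (swE w) 1

lemma bvec_apply (w x : FW) :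
    bvec w x = (if w = x then (1:ℂ) else 0) + (if swE w = x then 1 else 0) := by
  rw [bvec]
  erw [MonoidAlgebra.coeff_add, Finsupp.add_apply]
  rw [MonoidAlgebra.coeff_single, MonoidAlgebra.coeff_single, Finsupp.single_apply,
    Finsupp.single_apply]

lemma bvec_mem (n j : ℕ) (hn : 1 ≤ n) {w : FW} (hw : w ∈ Tset n j) :
    bvec w ∈ (invAlg n).toSubmodule ⊓ degComp j := by
  rw [mem_M_iff n hn j]
  rcases (mem_Tset n j w).mp hw with ⟨hlen, hdvd⟩
  rcases (mem_Tset n j (swE w)).mp (swE_mem_Tset hw) with ⟨hlen', hdvd'⟩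
  refine ⟨?_, ?_, ?_⟩
  · intro x hx
    rw [bvec_apply] at hx
    by_cases h1 : w = x
    · subst h1; exact hlen
    · by_cases h2 : swE w = x
      · subst h2; exact hlen'
      · rw [if_neg h1, if_neg h2] at hx; simp at hx
  · intro x hx
    rw [bvec_apply, if_neg, if_neg, add_zero]
    · intro h; exact hx (h ▸ hdvd')
    · intro h; exact hx (h ▸ hdvd)
  · intro x
    rw [bvec_apply, bvec_apply]
    have h1 : (w = swE x) ↔ (swE w = x) := by
      constructor
      · intro h; rw [h]; exact mapsw_invol x
      · intro h; rw [← h]; exact (mapsw_invol w).symm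
    have h2 : (swE w = swE x) ↔ (w = x) := swE.injective.eq_iff
    rw [if_congr h1 rfl rfl, if_congr h2 rfl rfl, add_comm]

lemma sum_bvec_apply (s : Finset FW) (c : FW → ℂ) (x : FW) :
    (∑ w ∈ s, c w • bvec w) x
      = (if x ∈ s then c x else 0) + (if swE x ∈ s then c (swE x) else 0) := by
  rw [MonoidAlgebra.coeff_sum, Finsupp.finset_sum_apply]
  have hterm : ∀ w ∈ s, (c w • bvec w) x
      = (if w = x then c w else 0) + (if w = swE x then c w else 0) := by
    intro w _
    rw [MonoidAlgebra.coeff_smul]; erw [Finsupp.smul_apply]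
    rw [bvec_apply, smul_eq_mul]
    have heq : (swE w = x) ↔ (w = swE x) := by
      constructor
      · intro h; rw [← h]; exact (mapsw_invol w).symm
      · intro h; rw [h]; exact mapsw_invol x
    rw [if_congr heq rfl rfl]
    split_ifs <;> ring
  rw [Finset.sum_congr rfl hterm, Finset.sum_add_distrib,
    Finset.sum_ite_eq' s x, Finset.sum_ite_eq' s (swE x)]

lemma repr_mem (n j : ℕ) (hn : 1 ≤ n) (hj : 1 ≤ j) (f : FA)
    (hf : f ∈ (invAlg n).toSubmodule ⊓ degComp j) :
    f = ∑ w ∈ Rset n j, f w • bvec w := by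
  rcases (mem_M_iff n hn j f).mp hf with ⟨hlen, hdvd, hsym⟩
  apply MonoidAlgebra.coeff_injective
  apply Finsupp.ext
  intro x
  rw [sum_bvec_apply]
  by_cases h1 : x ∈ Rset n j
  · have h2 : swE x ∉ Rset n j := by
      intro h2
      rw [Rset, Finset.mem_filter] at h1 h2
      rw [show swE (swE x) = x from mapsw_invol x] at h2
      exact lt_asymm h1.2 h2.2
    rw [if_pos h1, if_neg h2, add_zero]
  · by_cases h2 : swE x ∈ Rset n j
    · rw [if_neg h1, if_pos h2, zero_add, hsym]
    · rw [if_neg h1, if_neg h2, add_zero]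
      by_contra hfx
      have hxT : x ∈ Tset n j :=
        (mem_Tset n j x).mpr ⟨hlen x hfx, by_contra fun h => hfx (hdvd x h)⟩
      have hne : swE x ≠ x := swE_ne_self hj hxT
      rcases lt_or_ge (FreeMonoid.toList x) (FreeMonoid.toList (swE x)) with h | h
      · exact h1 (by rw [Rset, Finset.mem_filter]; exact ⟨hxT, h⟩)
      · rcases lt_or_eq_of_le h with h' | h'
        · apply h2
          rw [Rset, Finset.mem_filter]
          exact ⟨swE_mem_Tset hxT, by
            rw [show swE (swE x) = x from mapsw_invol x]; exact h'⟩
        · exact hne (FreeMonoid.toList.injective h')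

lemma indep (n j : ℕ) : LinearIndependent ℂ (fun w : ↥(Rset n j) => bvec ↑w) := by
  rw [linearIndependent_iff']
  intro s g hsum i hi
  have h0 := congrArg (fun f : FA => f ↑i) hsum
  rw [MonoidAlgebra.coeff_sum, Finsupp.finset_sum_apply] at h0
  have hterm : ∀ a ∈ s, (g a • bvec ↑a) (↑i : FW) = if a = i then g a else 0 := by
    intro a _
    rw [MonoidAlgebra.coeff_smul]; erw [Finsupp.smul_apply]
    rw [bvec_apply, smul_eq_mul]
    have hne : swE ↑a ≠ (↑i : FW) := by
      intro h
      have ha2 := a.2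
      have hi2 := i.2
      simp only [Rset, Finset.mem_filter] at ha2 hi2
      have ha3 := ha2.2
      have hi3 := hi2.2
      rw [h] at ha3
      rw [← h, show swE (swE (↑a : FW)) = ↑a from mapsw_invol _, h] at hi3
      exact lt_asymm ha3 hi3
    rw [if_neg hne, add_zero]
    by_cases h : (↑a : FW) = ↑i
    · rw [if_pos h, if_pos (Subtype.ext h), mul_one]
    · rw [if_neg h, if_neg (fun hh => h (congrArg _ hh)), mul_zero]
  rw [Finset.sum_congr rfl hterm, Finset.sum_ite_eq' s i, if_pos hi] at h0
  simpa using h0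

lemma aDim_eq (n j : ℕ) (hn : 1 ≤ n) (hj : 1 ≤ j) :
    aDim n j = (Rset n j).card := by
  have hspan : (invAlg n).toSubmodule ⊓ degComp j
      = Submodule.span ℂ (Set.range fun w : ↥(Rset n j) => bvec ↑w) := by
    apply le_antisymm
    · intro f hf
      rw [repr_mem n j hn hj f hf]
      apply Submodule.sum_mem
      intro w hw
      apply Submodule.smul_mem
      apply Submodule.subset_span
      exact ⟨⟨w, hw⟩, rfl⟩
    · rw [Submodule.span_le]
      rintro _ ⟨w, rfl⟩
      have hw := w.2
      simp only [Rset, Finset.mem_filter] at hw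
      exact bvec_mem n j hn hw.1
  rw [aDim, hspan, finrank_span_eq_card (indep n j), Fintype.card_coe]

-- analytic side
lemma zpow_sum0 {x : ℂ} (hx : x ≠ 0) {ι : Type*} (s : Finset ι) (f : ι → ℤ) :
    x ^ (∑ i ∈ s, f i) = ∏ i ∈ s, x ^ f i := by
  classical
  induction s using Finset.induction with
  | empty => simp
  | insert a s h ih => rw [Finset.sum_insert h, Finset.prod_insert h, zpow_add₀ hx, ih]

lemma dW_wordF (j : ℕ) (g : Fin j → Fin 2) : dW (wordF j g) = ∑ i, eps (g i) := by
  rw [dW, wordF, FreeMonoid.toList_ofList, List.map_ofFn, List.sum_ofFn]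
  rfl

lemma xic_pow_nat (n : ℕ) (hn : 1 ≤ n) : xic n ^ ((n:ℤ)) = 1 :=
  (xic_zpow_eq_one n hn n).mpr dvd_rfl

lemma geom (n : ℕ) (hn : 1 ≤ n) (d : ℤ) :
    ∑ k ∈ Finset.range n, (xic n ^ d) ^ k = if (n:ℤ) ∣ d then (n:ℂ) else 0 := by
  by_cases hd : (n:ℤ) ∣ d
  · rw [if_pos hd, (xic_zpow_eq_one n hn d).mpr hd]
    simp
  · rw [if_neg hd]
    have hne : xic n ^ d ≠ 1 := fun h => hd ((xic_zpow_eq_one n hn d).mp h)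
    rw [geom_sum_eq hne]
    have hone : (xic n ^ d) ^ n = 1 := by
      rw [← zpow_natCast, ← zpow_mul, mul_comm, zpow_mul, xic_pow_nat n hn, one_zpow]
    rw [hone, sub_self, zero_div]

lemma expand (n : ℕ) (j : ℕ) (k : ℕ) :
    (xic n ^ (k:ℤ) + xic n ^ (-(k:ℤ))) ^ j
      = ∑ g : Fin j → Fin 2, xic n ^ ((k:ℤ) * dW (wordF j g)) := by
  have h1 : (xic n ^ (k:ℤ) + xic n ^ (-(k:ℤ))) ^ j
      = ∏ _i : Fin j, ∑ t : Fin 2, xic n ^ ((k:ℤ) * eps t) := by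
    rw [Finset.prod_const, Finset.card_univ, Fintype.card_fin]
    congr 1
    rw [Fin.sum_univ_two]
    norm_num [eps]
  rw [h1, Finset.prod_univ_sum, Fintype.piFinset_univ]
  apply Finset.sum_congr rfl
  intro g _
  rw [dW_wordF, Finset.mul_sum, zpow_sum0 (xic_ne_zero n)]

lemma key_sum (n : ℕ) (hn : 1 ≤ n) (j : ℕ) :
    ∑ k ∈ Finset.range n, (xic n ^ (k:ℤ) + xic n ^ (-(k:ℤ))) ^ j
      = (n : ℂ) * (Tf n j).card := by
  have h1 : ∀ k ∈ Finset.range n, (xic n ^ (k:ℤ) + xic n ^ (-(k:ℤ))) ^ j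
      = ∑ g : Fin j → Fin 2, (xic n ^ (dW (wordF j g))) ^ k := by
    intro k _
    rw [expand n j k]
    apply Finset.sum_congr rfl
    intro g _
    rw [← zpow_natCast, ← zpow_mul, mul_comm]
  rw [Finset.sum_congr rfl h1, Finset.sum_comm]
  have h2 : ∀ g : Fin j → Fin 2, ∑ k ∈ Finset.range n, (xic n ^ (dW (wordF j g))) ^ k
      = if (n:ℤ) ∣ dW (wordF j g) then (n:ℂ) else 0 := fun g => geom n hn _
  rw [Finset.sum_congr rfl (fun g _ => h2 g), Finset.sum_ite, Finset.sum_const,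
    Finset.sum_const_zero, add_zero, nsmul_eq_mul]
  rw [Tf, mul_comm]

lemma cos_link (n k : ℕ) (j : ℕ) :
    ((2 * Real.cos (2 * Real.pi * k / n)) ^ j : ℂ)
      = (xic n ^ (k:ℤ) + xic n ^ (-(k:ℤ))) ^ j := by
  have h0 : ((2 * Real.cos (2 * Real.pi * k / n)) ^ j : ℂ)
      = (((2 * Real.cos (2 * Real.pi * k / n) : ℝ) : ℂ)) ^ j := by push_cast; ring
  rw [h0]
  congr 1
  calc ((2 * Real.cos (2 * Real.pi * k / n) : ℝ) : ℂ)
      = 2 * Complex.cos (((2 * Real.pi * k / n : ℝ) : ℂ)) := by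
        push_cast [Complex.ofReal_cos]
        ring
    _ = Complex.exp (((2 * Real.pi * k / n : ℝ) : ℂ) * Complex.I)
        + Complex.exp (-((2 * Real.pi * k / n : ℝ) : ℂ) * Complex.I) := Complex.two_cos _
    _ = xic n ^ (k:ℤ) + xic n ^ (-(k:ℤ)) := by
        rw [xic, ← Complex.exp_int_mul, ← Complex.exp_int_mul]
        congr 1 <;> · congr 1; push_cast; ring

lemma cos_link' (n k j : ℕ) :
    (2 * Complex.cos (2 * (Real.pi : ℂ) * (k : ℂ) / (n : ℂ))) ^ j
      = (xic n ^ (k:ℤ) + xic n ^ (-(k:ℤ))) ^ j := by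
  congr 1
  rw [show (2 * (Real.pi : ℂ) * (k : ℂ) / (n : ℂ))
      = ((2 * Real.pi * k / n : ℝ) : ℂ) by push_cast; ring]
  rw [Complex.two_cos, xic, ← Complex.exp_int_mul, ← Complex.exp_int_mul]
  congr 1 <;> · congr 1; push_cast; ring


/-- Dimension of the degree-`j` component of the dihedral invariants, as a trace average
(noncommutative Molien formula for the dihedral group, coefficientwise). -/
theorem dihedral_invariants_dim_eq_cos_sum (n : ℕ) (hn : 1 ≤ n) (j : ℕ) (hj : 1 ≤ j) :
    (aDim n j : ℝ) =
      (1 / (2 * n)) * ∑ k ∈ Finset.range n, (2 * Real.cos (2 * π * k / n)) ^ j := by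
  have hn0 : (n:ℝ) ≠ 0 := Nat.cast_ne_zero.mpr (by omega)
  have hC : ((∑ k ∈ Finset.range n, (2 * Real.cos (2 * π * k / n)) ^ j : ℝ) : ℂ)
      = (((n : ℝ) * ((Tf n j).card : ℝ) : ℝ) : ℂ) := by
    push_cast
    rw [Finset.sum_congr rfl fun k _ => cos_link' n k j, key_sum n hn j]
  have hkey : ∑ k ∈ Finset.range n, (2 * Real.cos (2 * π * k / n)) ^ j
      = (n : ℝ) * ((Tf n j).card : ℝ) := by exact_mod_cast hC
  rw [hkey, aDim_eq n j hn hj]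
  have hc2 : (Tf n j).card = 2 * (Rset n j).card := by
    rw [← card_Tset n j]
    exact card_Tset_two_mul n j hj
  rw [hc2]
  push_cast
  field_simp

end
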